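/- It is not possible for the tree T_∞ (the set of all finite subsets of ℕ with the shortest path graph metric) to be a Lipschitz quotient of a subset of a Banach space with property (β) of Rolewicz. -/

import Mathlib

open scoped Classical

/-- The longest common initial segment (closest common ancestor) of J and K in the
tree T_∞ of finite subsets of ℕ. -/
noncomputable def treeMeet (J K : Finset ℕ) : Finset ℕ :=
  J.filter (fun a => a ∈ K ∧ ∀ b ≤ a, (b ∈ J ↔ b ∈ K))

/-- The shortest path distance in the tree T_∞ of finite subsets of ℕ. -/
noncomputable def treeDist (J K : Finset ℕ) : ℕ :=
  (J.card - (treeMeet J K).card) + (K.card - (treeMeet J K).card)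

/-- Auxiliary: `T` is a descendant of `S` at depth `h`, all new elements larger than
everything in `S ∪ F`. -/
def TDesc (S T F : Finset ℕ) (h : ℕ) : Prop :=
  S ⊆ T ∧ T.card = S.card + h ∧ ∀ x ∈ T, x ∉ S → ∀ y ∈ S ∪ F, y < x

lemma treeMeet_eq_of (M J K : Finset ℕ) (hMJ : M ⊆ J) (hMK : M ⊆ K)
    (hI : ∀ x ∈ J, x ∈ K → x ∈ M)
    (hJn : ∀ x ∈ J, x ∉ M → ∀ y ∈ M, y < x)
    (hKn : ∀ x ∈ K, x ∉ M → ∀ y ∈ M, y < x) :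
    treeMeet J K = M := by
  ext a
  simp only [treeMeet, Finset.mem_filter]
  constructor
  · rintro ⟨haJ, haK, -⟩
    exact hI a haJ haK
  · intro haM
    refine ⟨hMJ haM, hMK haM, ?_⟩
    intro b hb
    constructor
    · intro hbJ
      have hbM : b ∈ M := by
        by_contra hbM
        exact absurd hb (not_le.mpr (hJn b hbJ hbM a haM))
      exact hMK hbM
    · intro hbK
      have hbM : b ∈ M := by
        by_contra hbM
        exact absurd hb (not_le.mpr (hKn b hbK hbM a haM))
      exact hMJ hbM

lemma treeDist_eq_of (M J K : Finset ℕ) (hj hk : ℕ)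
    (hJ : J.card = M.card + hj) (hK : K.card = M.card + hk)
    (hmeet : treeMeet J K = M) : treeDist J K = hj + hk := by
  simp only [treeDist, hmeet, hJ, hK]
  omega

lemma tdesc_treeDist {S T F : Finset ℕ} {h : ℕ} (hd : TDesc S T F h) :
    treeDist S T = h := by
  obtain ⟨hsub, hcard, hnew⟩ := hd
  have hmeet : treeMeet S T = S := by
    refine treeMeet_eq_of S S T subset_rfl hsub (fun x hx _ => hx) ?_ ?_
    · intro x hx hx'; exact absurd hx hx'
    · intro x hxT hxS y hy
      exact hnew x hxT hxS y (Finset.mem_union_left _ hy)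
  have := treeDist_eq_of S S T 0 h (by omega) hcard hmeet
  omega

lemma tdesc_trans {S M T F F' : Finset ℕ} {h₁ h₂ : ℕ}
    (h1 : TDesc S M F h₁) (h2 : TDesc M T F' h₂) (hFF : F ⊆ F') :
    TDesc S T F (h₁ + h₂) := by
  obtain ⟨hsub1, hcard1, hnew1⟩ := h1
  obtain ⟨hsub2, hcard2, hnew2⟩ := h2
  refine ⟨hsub1.trans hsub2, by omega, ?_⟩
  intro x hxT hxS y hy
  by_cases hxM : x ∈ M
  · exact hnew1 x hxM hxS y hy
  · refine hnew2 x hxT hxM y ?_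
    rcases Finset.mem_union.mp hy with h | h
    · exact Finset.mem_union_left _ (hsub1 h)
    · exact Finset.mem_union_right _ (hFF h)

lemma tdesc_siblings {M J K Fj Fk : Finset ℕ} {h h' : ℕ}
    (hJ : TDesc M J Fj h) (hK : TDesc M K Fk h')
    (hI : ∀ x ∈ J, x ∈ K → x ∈ M) :
    treeDist J K = h + h' := by
  obtain ⟨hsubJ, hcardJ, hnewJ⟩ := hJ
  obtain ⟨hsubK, hcardK, hnewK⟩ := hK
  refine treeDist_eq_of M J K h h' hcardJ hcardK ?_
  refine treeMeet_eq_of M J K hsubJ hsubK hI ?_ ?_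
  · intro x hx hx' y hy; exact hnewJ x hx hx' y (Finset.mem_union_left _ hy)
  · intro x hx hx' y hy; exact hnewK x hx hx' y (Finset.mem_union_left _ hy)

/-- T_∞ is not a Lipschitz quotient of a subset of a Banach space with property (β). -/
theorem no_lipschitz_quotient_onto_tree
    (X : Type*) [NormedAddCommGroup X] [NormedSpace ℝ X] [CompleteSpace X]
    (hβ : ∀ t : ℝ, 0 < t → t ≤ 2 → ∃ δ : ℝ, 0 < δ ∧
      ∀ (x : X) (xs : ℕ → X), ‖x‖ ≤ 1 → (∀ n, ‖xs n‖ ≤ 1) →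
        (∀ n m, n ≠ m → t ≤ ‖xs n - xs m‖) →
        ∃ n, ‖x - xs n‖ / 2 ≤ 1 - δ)
    (A : Set X) (g : A → Finset ℕ) (hsurj : Function.Surjective g) :
    ¬ ∃ c L : ℝ, 0 < c ∧ 0 < L ∧ ∀ (a : A) (r : ℝ), 0 < r →
      (∀ J : Finset ℕ, (treeDist (g a) J : ℝ) ≤ c * r →
        ∃ b : A, dist (a : X) (b : X) ≤ r ∧ g b = J) ∧
      (∀ b : A, dist (a : X) (b : X) ≤ r → (treeDist (g a) (g b) : ℝ) ≤ L * r) := by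
  rintro ⟨c, L, hc, hL, hQ⟩
  -- the Lipschitz estimate
  have hLip : ∀ a b : A, (treeDist (g a) (g b) : ℝ) ≤ L * dist (a : X) (b : X) := by
    intro a b
    refine le_of_forall_pos_le_add ?_
    intro ε hε
    have hr : (0 : ℝ) < dist (a : X) (b : X) + ε / L := by positivity
    have := (hQ a (dist (a : X) (b : X) + ε / L) hr).2 b (by linarith [div_pos hε hL])
    calc (treeDist (g a) (g b) : ℝ) ≤ L * (dist (a : X) (b : X) + ε / L) := this
      _ = L * dist (a : X) (b : X) + ε := by field_simp
  -- the co-Lipschitz estimate at depth 1, with branch avoidance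
  have hCo : ∀ (a : A) (F : Finset ℕ), ∃ b : A,
      TDesc (g a) (g b) F 1 ∧ dist (a : X) (b : X) ≤ 1 / c := by
    intro a F
    set N := (g a ∪ F).sup id + 1 with hN
    have hNbig : ∀ y ∈ g a ∪ F, y < N := by
      intro y hy
      have : y ≤ (g a ∪ F).sup id := Finset.le_sup (f := id) hy
      omega
    have hNnot : N ∉ g a := by
      intro h
      exact absurd (hNbig N (Finset.mem_union_left _ h)) (lt_irrefl N)
    have hd : TDesc (g a) (insert N (g a)) F 1 := by
      refine ⟨Finset.subset_insert _ _, Finset.card_insert_of_notMem hNnot, ?_⟩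
      intro x hx hxs y hy
      rcases Finset.mem_insert.mp hx with rfl | h
      · exact hNbig y hy
      · exact absurd h hxs
    have hdist1 : (treeDist (g a) (insert N (g a)) : ℝ) = 1 := by
      rw [tdesc_treeDist hd]; norm_num
    obtain ⟨b, hb1, hb2⟩ := (hQ a (1 / c) (by positivity)).1 (insert N (g a))
      (by rw [hdist1, mul_one_div, div_self hc.ne'])
    exact ⟨b, by rw [hb2]; exact hd, hb1⟩
  -- a base point
  obtain ⟨a₀, -⟩ := hsurj ∅
  -- c ≤ L
  have hcL : c ≤ L := by
    obtain ⟨b, hd, hdist⟩ := hCo a₀ ∅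
    have h1 : (treeDist (g a₀) (g b) : ℝ) = 1 := by rw [tdesc_treeDist hd]; norm_num
    have h2 := hLip a₀ b
    rw [h1] at h2
    have h3 : (1 : ℝ) ≤ L * (1 / c) := by
      refine h2.trans (mul_le_mul_of_nonneg_left hdist hL.le)
    rw [mul_one_div, le_div_iff₀ hc, one_mul] at h3
    linarith
  -- the modulus δ from property (β) at t₀ = 2c/L
  obtain ⟨δ', hδ'pos, hβ'⟩ := hβ (2 * c / L) (by positivity)
    (by rw [div_le_iff₀ hL]; linarith)
  set δ : ℝ := min δ' (1 / 2) with hδdef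
  have hδpos : 0 < δ := lt_min hδ'pos (by norm_num)
  have hδhalf : δ ≤ 1 / 2 := min_le_right _ _
  have hδle : δ ≤ δ' := min_le_left _ _
  have h2d_pos : (0 : ℝ) < 2 * (1 - δ) := by linarith
  have h2d_le2 : 2 * (1 - δ) ≤ 2 := by linarith
  -- the key inductive contraction
  have key : ∀ k : ℕ, ∀ (a : A) (F : Finset ℕ), ∃ b : A,
      TDesc (g a) (g b) F (2 ^ k) ∧
      dist (a : X) (b : X) ≤ (2 * (1 - δ)) ^ k / c := by
    intro k
    induction k with
    | zero => simpa using hCo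
    | succ k ih =>
      intro a F
      set s : ℝ := (2 * (1 - δ)) ^ k / c with hs
      have hs0 : (0 : ℝ) < s := by positivity
      have hsle : s ≤ 2 ^ k / c :=
        (div_le_div_iff_of_pos_right hc).mpr (pow_le_pow_left₀ h2d_pos.le h2d_le2 k)
      -- midpoint
      obtain ⟨m, hm_d, hm_dist⟩ := ih a F
      -- choice function for descendants of m
      choose W hW1 hW2 using ih m
      -- the recursively accumulated forbidden sets
      obtain ⟨Fr, hFr0, hFrS⟩ : ∃ Fr : ℕ → Finset ℕ, Fr 0 = F ∧
          ∀ n, Fr (n + 1) = Fr n ∪ g (W (Fr n)) :=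
        ⟨fun n => Nat.rec F (fun _ Fn => Fn ∪ g (W Fn)) n, rfl, fun n => rfl⟩
      set b : ℕ → A := fun n => W (Fr n) with hb
      have hmono : Monotone Fr := by
        apply monotone_nat_of_le_succ
        intro n
        rw [hFrS n]
        exact Finset.subset_union_left
      have hsubF : ∀ i j : ℕ, i < j → g (b i) ⊆ Fr j := by
        intro i j hij
        have h1 : g (b i) ⊆ Fr (i + 1) := by
          rw [hFrS i]
          exact Finset.subset_union_right
        exact h1.trans (hmono hij)
      have hFsub : ∀ n, F ⊆ Fr n := fun n => hFr0 ▸ hmono (Nat.zero_le n)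
      -- pairwise tree distance of the b's
      have hsep : ∀ i j : ℕ, i ≠ j → treeDist (g (b i)) (g (b j)) = 2 ^ (k + 1) := by
        intro i j hij
        have hI : ∀ x ∈ g (b i), x ∈ g (b j) → x ∈ g m := by
          intro x hxi hxj
          by_contra hxM
          rcases hij.lt_or_gt with h | h
          · exact absurd ((hW1 (Fr j)).2.2 x hxj hxM x
              (Finset.mem_union_right _ (hsubF i j h hxi))) (lt_irrefl x)
          · exact absurd ((hW1 (Fr i)).2.2 x hxi hxM x
              (Finset.mem_union_right _ (hsubF j i h hxj))) (lt_irrefl x)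
        have := tdesc_siblings (hW1 (Fr i)) (hW1 (Fr j)) hI
        rw [this]
        ring
      -- separation in X
      have hsepX : ∀ i j : ℕ, i ≠ j →
          (2 : ℝ) ^ (k + 1) / L ≤ ‖(b i : X) - (b j : X)‖ := by
        intro i j hij
        have h1 := hLip (b i) (b j)
        rw [hsep i j hij] at h1
        push_cast at h1
        rw [dist_eq_norm] at h1
        rw [div_le_iff₀ hL]
        linarith [h1]
      -- apply property (β) in the ball B(m, s)
      have hx1 : ‖s⁻¹ • ((a : X) - (m : X))‖ ≤ 1 := by
        rw [norm_smul, norm_inv, Real.norm_eq_abs, abs_of_pos hs0]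
        rw [inv_mul_le_iff₀ hs0, mul_one, ← dist_eq_norm]
        exact hm_dist
      have hx2 : ∀ n, ‖s⁻¹ • ((b n : X) - (m : X))‖ ≤ 1 := by
        intro n
        rw [norm_smul, norm_inv, Real.norm_eq_abs, abs_of_pos hs0]
        rw [inv_mul_le_iff₀ hs0, mul_one, ← dist_eq_norm, dist_comm]
        exact hW2 (Fr n)
      have hx3 : ∀ n n', n ≠ n' → 2 * c / L ≤
          ‖s⁻¹ • ((b n : X) - (m : X)) - s⁻¹ • ((b n' : X) - (m : X))‖ := by
        intro n n' hnn
        have heq : s⁻¹ • ((b n : X) - (m : X)) - s⁻¹ • ((b n' : X) - (m : X))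
            = s⁻¹ • ((b n : X) - (b n' : X)) := by
          rw [← smul_sub]; congr 1; abel
        rw [heq, norm_smul, norm_inv, Real.norm_eq_abs, abs_of_pos hs0]
        have h1 := hsepX n n' hnn
        have h2 : c * s ≤ 2 ^ k := by
          have hple : (2 * (1 - δ)) ^ k ≤ (2:ℝ) ^ k :=
            pow_le_pow_left₀ h2d_pos.le h2d_le2 k
          calc c * s = (2 * (1 - δ)) ^ k := by rw [hs]; field_simp
            _ ≤ 2 ^ k := hple
        have h3 : 2 * c / L ≤ s⁻¹ * ((2 : ℝ) ^ (k + 1) / L) := by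
          rw [inv_mul_eq_div, div_div, div_le_div_iff₀ hL (by positivity)]
          have hpow : (2:ℝ) ^ (k + 1) = 2 * 2 ^ k := by ring
          nlinarith [mul_le_mul_of_nonneg_left h2 hL.le]
        calc 2 * c / L ≤ s⁻¹ * ((2 : ℝ) ^ (k + 1) / L) := h3
          _ ≤ s⁻¹ * ‖(b n : X) - (b n' : X)‖ :=
            mul_le_mul_of_nonneg_left h1 (inv_pos.mpr hs0).le
      obtain ⟨n, hn⟩ := hβ' (s⁻¹ • ((a : X) - (m : X)))
        (fun n => s⁻¹ • ((b n : X) - (m : X))) hx1 hx2 hx3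
      refine ⟨b n, ?_, ?_⟩
      · have := tdesc_trans hm_d (hW1 (Fr n)) (hFsub n)
        convert this using 1
        ring
      · have heq : s⁻¹ • ((a : X) - (m : X)) - s⁻¹ • ((b n : X) - (m : X))
            = s⁻¹ • ((a : X) - (b n : X)) := by
          rw [← smul_sub]; congr 1; abel
        rw [heq, norm_smul, norm_inv, Real.norm_eq_abs, abs_of_pos hs0] at hn
        have h4 : ‖(a : X) - (b n : X)‖ ≤ 2 * (1 - δ) * s := by
          have h5 : s⁻¹ * ‖(a : X) - (b n : X)‖ ≤ 2 * (1 - δ') := by linarith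
          have h6 : 2 * (1 - δ') ≤ 2 * (1 - δ) := by linarith
          calc ‖(a : X) - (b n : X)‖ = s * (s⁻¹ * ‖(a : X) - (b n : X)‖) := by
                field_simp
            _ ≤ s * (2 * (1 - δ)) := by nlinarith
            _ = 2 * (1 - δ) * s := by ring
        rw [dist_eq_norm]
        calc ‖(a : X) - (b n : X)‖ ≤ 2 * (1 - δ) * s := h4
          _ = (2 * (1 - δ)) ^ (k + 1) / c := by rw [hs]; ring
  -- final contradiction
  obtain ⟨k, hk⟩ := exists_pow_lt_of_lt_one (show (0:ℝ) < c / L by positivity)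
    (show 1 - δ < 1 by linarith)
  obtain ⟨b, hd, hdist⟩ := key k a₀ ∅
  have h1 : (treeDist (g a₀) (g b) : ℝ) = 2 ^ k := by
    rw [tdesc_treeDist hd]; push_cast; ring
  have h2 := hLip a₀ b
  rw [h1] at h2
  have h3 : (2:ℝ) ^ k ≤ L * ((2 * (1 - δ)) ^ k / c) :=
    h2.trans (mul_le_mul_of_nonneg_left hdist hL.le)
  have h2k : (0:ℝ) < 2 ^ k := by positivity
  rw [← mul_div_assoc] at h3
  have h3' : (2:ℝ) ^ k * c ≤ L * (2 * (1 - δ)) ^ k := (le_div_iff₀ hc).mp h3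
  have h4 : (2 * (1 - δ)) ^ k = (2:ℝ) ^ k * (1 - δ) ^ k := mul_pow _ _ _
  rw [h4] at h3'
  have h5 : c / L ≤ (1 - δ) ^ k := by
    rw [div_le_iff₀ hL]
    nlinarith [h3', h2k]
  linarith
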